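/- Let p be a prime and F ⊆ L number fields such that every infinite place of L lying above a real place of F is real. Fix d ∈ ℕ, an integer d_v for each finite place v of F above p, and an integer d_v⁺ for each real place v of F; for a finite place w of L above p set d_w := d_v with v the place of F below w, and for a real place w of L set d_w⁺ := d_v⁺ with v the real place of F below w. If ∑_{v|p} (d − d_v)·[F_v : ℚ_p] = d·r₂(F) + ∑_{v real} (d − d_v⁺), then ∑_{w|p} (d − d_w)·[L_w : ℚ_p] = d·r₂(L) + ∑_{w real} (d − d_w⁺). -/

import Mathlib

/-!
STATEMENT 3: Let p be a prime and F ⊆ L number fields such that every infinite place of L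
lying above a real place of F is real.  Fix d ∈ ℕ, an integer d_v for each finite place v
of F above p, and an integer d_v⁺ for each real place v of F; for a finite place w of L
above p set d_w := d_v with v the place of F below w, and for a real place w of L set
d_w⁺ := d_v⁺ with v the real place of F below w.  If
∑_{v|p} (d − d_v)·[F_v : ℚ_p] = d·r₂(F) + ∑_{v real} (d − d_v⁺), then
∑_{w|p} (d − d_w)·[L_w : ℚ_p] = d·r₂(L) + ∑_{w real} (d − d_w⁺).
-/

open NumberField

/-- A finite place of a number field `K` above the rational prime `p`: a nonzero prime
ideal of the ring of integers of `K` containing `p`. -/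
def IsFinitePlaceAbove (p : ℕ) (K : Type*) [Field K] [NumberField K]
    (w : Ideal (𝓞 K)) : Prop :=
  w.IsPrime ∧ w ≠ ⊥ ∧ (p : 𝓞 K) ∈ w

/-- The local degree `[K_w : ℚ_p] = e(w|p) · f(w|p)`, the product of the ramification index
and the residue class degree of `w` over `p`. -/
noncomputable def localDegree (p : ℕ) (K : Type*) [Field K] [NumberField K]
    (w : Ideal (𝓞 K)) : ℕ :=
  Ideal.ramificationIdx' (Ideal.span {(p : ℤ)}) w *
    Ideal.inertiaDeg' (Ideal.span {(p : ℤ)}) w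

open UniqueFactorizationMonoid
open scoped Classical

section Aux

lemma DE.map_span_p (p : ℕ) (K : Type*) [Field K] [NumberField K] :
    Ideal.map (algebraMap ℤ (𝓞 K)) (Ideal.span {(p : ℤ)}) = Ideal.span {(p : 𝓞 K)} := by
  rw [Ideal.map_span, Set.image_singleton, map_natCast]

lemma DE.map_span_p_ne_bot (p : ℕ) (hp : p.Prime) (K : Type*) [Field K] [NumberField K] :
    Ideal.map (algebraMap ℤ (𝓞 K)) (Ideal.span {(p : ℤ)}) ≠ ⊥ := by
  rw [DE.map_span_p, Ne, Ideal.span_singleton_eq_bot]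
  exact_mod_cast hp.ne_zero

/-- Characterization of finite places above `p` as factors of `p·𝓞K`. -/
lemma DE.mem_TK (p : ℕ) (hp : p.Prime) (K : Type*) [Field K] [NumberField K]
    (w : Ideal (𝓞 K)) :
    IsFinitePlaceAbove p K w ↔
      w ∈ (factors (Ideal.map (algebraMap ℤ (𝓞 K)) (Ideal.span {(p : ℤ)}))).toFinset := by
  rw [Multiset.mem_toFinset, factors_eq_normalizedFactors,
    Ideal.mem_normalizedFactors_iff (DE.map_span_p_ne_bot p hp K), DE.map_span_p,
    Ideal.span_singleton_le_iff_mem]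
  constructor
  · rintro ⟨h1, h2, h3⟩; exact ⟨h1, h3⟩
  · rintro ⟨h1, h3⟩
    refine ⟨h1, ?_, h3⟩
    rintro rfl
    rw [Ideal.mem_bot] at h3
    exact_mod_cast hp.ne_zero (by exact_mod_cast h3)

variable (F L : Type*) [Field F] [NumberField F] [Field L] [NumberField L] [Algebra F L]

lemma DE.algebraMap_OFL_injective : Function.Injective (algebraMap (𝓞 F) (𝓞 L)) := by
  intro x y h
  have h2 : Function.Injective (algebraMap (𝓞 F) L) := by
    rw [IsScalarTower.algebraMap_eq (𝓞 F) F L]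
    exact (algebraMap F L).injective.comp RingOfIntegers.coe_injective
  apply h2
  rw [IsScalarTower.algebraMap_eq (𝓞 F) (𝓞 L) L, RingHom.comp_apply, RingHom.comp_apply, h]

lemma DE.map_to_L_ne_bot {v : Ideal (𝓞 F)} (hv : v ≠ ⊥) :
    Ideal.map (algebraMap (𝓞 F) (𝓞 L)) v ≠ ⊥ := by
  rwa [Ne, Ideal.map_eq_bot_iff_of_injective (DE.algebraMap_OFL_injective F L)]

lemma DE.fiber_char (p : ℕ) (hp : p.Prime) {v : Ideal (𝓞 F)} (hv : IsFinitePlaceAbove p F v)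
    (w : Ideal (𝓞 L)) :
    w ∈ (factors (Ideal.map (algebraMap (𝓞 F) (𝓞 L)) v)).toFinset ↔
      IsFinitePlaceAbove p L w ∧ Ideal.comap (algebraMap (𝓞 F) (𝓞 L)) w = v := by
  have hmax : v.IsMaximal := Ring.DimensionLEOne.maximalOfPrime hv.2.1 hv.1
  rw [Multiset.mem_toFinset, factors_eq_normalizedFactors,
    Ideal.mem_normalizedFactors_iff (DE.map_to_L_ne_bot F L hv.2.1), Ideal.map_le_iff_le_comap]
  constructor
  · rintro ⟨h1, h2⟩
    have hne : Ideal.comap (algebraMap (𝓞 F) (𝓞 L)) w ≠ ⊤ := by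
      intro ht
      rw [Ideal.eq_top_iff_one, Ideal.mem_comap, map_one] at ht
      exact h1.ne_top (Ideal.eq_top_iff_one w |>.mpr ht)
    have hcomap : Ideal.comap (algebraMap (𝓞 F) (𝓞 L)) w = v := (hmax.eq_of_le hne h2).symm
    have hpw : (p : 𝓞 L) ∈ w := by
      have := h2 hv.2.2
      rwa [Ideal.mem_comap, map_natCast] at this
    have hwb : w ≠ ⊥ := by
      rintro rfl
      rw [Ideal.mem_bot] at hpw
      exact hp.ne_zero (by exact_mod_cast hpw)
    exact ⟨⟨h1, hwb, hpw⟩, hcomap⟩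
  · rintro ⟨⟨h1, h2, h3⟩, rfl⟩
    exact ⟨h1, le_refl _⟩

lemma DE.sum_fiber_localDegree (p : ℕ) (hp : p.Prime) {v : Ideal (𝓞 F)}
    (hv : IsFinitePlaceAbove p F v) :
    ∑ w ∈ (factors (Ideal.map (algebraMap (𝓞 F) (𝓞 L)) v)).toFinset, localDegree p L w
      = Module.finrank F L * localDegree p F v := by
  letI : Module.Finite (𝓞 F) (𝓞 L) := ⟨IsNoetherian.noetherian ⊤⟩
  haveI hmax : v.IsMaximal := Ring.DimensionLEOne.maximalOfPrime hv.2.1 hv.1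
  haveI hspan : (Ideal.span {(p : ℤ)}).IsMaximal :=
    PrincipalIdealRing.isMaximal_of_irreducible
      (Int.prime_iff_natAbs_prime.mpr (by simpa using hp)).irreducible
  haveI : v.LiesOver (Ideal.span {(p : ℤ)}) := ⟨by
    show Ideal.span {(p : ℤ)} = Ideal.comap (algebraMap ℤ (𝓞 F)) v
    have h1 : Ideal.span {(p : ℤ)} ≤ Ideal.comap (algebraMap ℤ (𝓞 F)) v := by
      rw [Ideal.span_singleton_le_iff_mem, Ideal.mem_comap, map_natCast]
      exact hv.2.2
    have h2 : Ideal.comap (algebraMap ℤ (𝓞 F)) v ≠ ⊤ := by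
      intro ht
      rw [Ideal.eq_top_iff_one, Ideal.mem_comap, map_one] at ht
      exact hv.1.ne_top (Ideal.eq_top_iff_one v |>.mpr ht)
    exact hspan.eq_of_le h2 h1⟩
  have key : ∀ w ∈ (factors (Ideal.map (algebraMap (𝓞 F) (𝓞 L)) v)).toFinset,
      localDegree p L w =
        localDegree p F v *
          (Ideal.ramificationIdx' v w *
            Ideal.inertiaDeg' v w) := by
    intro w hw
    rw [DE.fiber_char F L p hp hv] at hw
    obtain ⟨⟨h1, h2, h3⟩, hcomap⟩ := hw
    haveI : w.IsPrime := h1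
    haveI : w.LiesOver v := ⟨by
      show v = Ideal.comap (algebraMap (𝓞 F) (𝓞 L)) w
      exact hcomap.symm⟩
    have he : Ideal.ramificationIdx' (Ideal.span {(p : ℤ)}) w =
        Ideal.ramificationIdx' (Ideal.span {(p : ℤ)}) v *
          Ideal.ramificationIdx' v w :=
      Ideal.ramificationIdx'_algebra_tower (DE.map_to_L_ne_bot F L hv.2.1)
        (DE.map_span_p_ne_bot p hp L) (Ideal.map_le_iff_le_comap.mpr (le_of_eq hcomap.symm))
    have hf : Ideal.inertiaDeg' (Ideal.span {(p : ℤ)}) w =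
        Ideal.inertiaDeg' (Ideal.span {(p : ℤ)}) v *
          Ideal.inertiaDeg' v w :=
      Ideal.inertiaDeg'_algebra_tower (Ideal.span {(p : ℤ)}) v w
    unfold localDegree
    rw [he, hf]
    ring
  rw [Finset.sum_congr rfl key, ← Finset.mul_sum,
    Ideal.sum_ramification_inertia (𝓞 L) F L (p := v) hv.2.1, mul_comm]

lemma DE.card_lift (φ : F →+* ℂ) :
    Fintype.card {ψ : L →+* ℂ // ψ.comp (algebraMap F L) = φ} = Module.finrank F L := by
  letI : Algebra F ℂ := φ.toAlgebra
  haveI : FiniteDimensional F L := Module.Finite.of_restrictScalars_finite ℚ F L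
  have e : {ψ : L →+* ℂ // ψ.comp (algebraMap F L) = φ} ≃ (L →ₐ[F] ℂ) :=
    { toFun := fun ψ => ⟨ψ.1, fun r => (congrFun (congrArg DFunLike.coe ψ.2) r).symm ▸ rfl⟩
      invFun := fun α => ⟨α.toRingHom, RingHom.ext fun r => α.commutes r⟩
      left_inv := fun ψ => Subtype.ext rfl
      right_inv := fun α => AlgHom.ext fun x => rfl }
  rw [Fintype.card_congr e, AlgHom.card]

lemma DE.sum_mult_fiber (v : InfinitePlace F) :
    ∑ w ∈ Finset.univ.filter (fun w : InfinitePlace L => w.comap (algebraMap F L) = v),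
      w.mult = v.mult * Module.finrank F L := by
  classical
  set S : Finset (L →+* ℂ) :=
    Finset.univ.filter (fun ψ : L →+* ℂ => InfinitePlace.mk (ψ.comp (algebraMap F L)) = v)
    with hS
  have ha : S.card =
      ∑ w ∈ Finset.univ.filter (fun w : InfinitePlace L => w.comap (algebraMap F L) = v),
        w.mult := by
    rw [Finset.card_eq_sum_card_fiberwise
      (f := InfinitePlace.mk)
      (t := Finset.univ.filter (fun w : InfinitePlace L => w.comap (algebraMap F L) = v))
      (fun ψ hψ => by
        simp only [hS, Finset.mem_coe, Finset.mem_filter, Finset.mem_univ, true_and] at hψ ⊢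
        rw [InfinitePlace.comap_mk]; exact hψ)]
    refine Finset.sum_congr rfl fun w hw => ?_
    simp only [Finset.mem_filter, Finset.mem_univ, true_and] at hw
    have : S.filter (fun ψ => InfinitePlace.mk ψ = w)
        = Finset.univ.filter (fun ψ : L →+* ℂ => InfinitePlace.mk ψ = w) := by
      ext ψ
      simp only [hS, Finset.mem_filter, Finset.mem_univ, true_and, and_iff_right_iff_imp]
      intro hψ
      rw [← hψ, InfinitePlace.comap_mk] at hw; exact hw
    rw [this]
    exact InfinitePlace.card_filter_mk_eq w
  have hb : S.card = v.mult * Module.finrank F L := by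
    rw [Finset.card_eq_sum_card_fiberwise
      (f := fun ψ : L →+* ℂ => ψ.comp (algebraMap F L))
      (t := Finset.univ.filter (fun φ : F →+* ℂ => InfinitePlace.mk φ = v))
      (fun ψ hψ => by
        simp only [hS, Finset.mem_coe, Finset.mem_filter, Finset.mem_univ, true_and] at hψ ⊢
        exact hψ)]
    have hinner : ∀ φ ∈ Finset.univ.filter (fun φ : F →+* ℂ => InfinitePlace.mk φ = v),
        (S.filter (fun ψ => ψ.comp (algebraMap F L) = φ)).card = Module.finrank F L := by
      intro φ hφ
      simp only [Finset.mem_filter, Finset.mem_univ, true_and] at hφ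
      have : S.filter (fun ψ => ψ.comp (algebraMap F L) = φ)
          = Finset.univ.filter (fun ψ : L →+* ℂ => ψ.comp (algebraMap F L) = φ) := by
        ext ψ
        simp only [hS, Finset.mem_filter, Finset.mem_univ, true_and, and_iff_right_iff_imp]
        intro hψ
        rw [hψ, hφ]
      rw [this, ← DE.card_lift F L φ, Fintype.card_subtype]
    rw [Finset.sum_congr rfl hinner, Finset.sum_const, smul_eq_mul]
    congr 1
    exact InfinitePlace.card_filter_mk_eq v
  rw [← ha, hb]

lemma DE.fiber_sum_ite
    (hur : ∀ w : InfinitePlace L, (w.comap (algebraMap F L)).IsReal → w.IsReal)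
    (d : ℕ) (dplus : InfinitePlace F → ℤ) (v : InfinitePlace F) :
    ∑ w ∈ Finset.univ.filter (fun w : InfinitePlace L => w.comap (algebraMap F L) = v),
        (if w.IsReal then ((d : ℤ) - dplus v) else (d : ℤ))
      = (Module.finrank F L : ℤ) * (if v.IsReal then ((d : ℤ) - dplus v) else (d : ℤ)) := by
  classical
  set t := Finset.univ.filter (fun w : InfinitePlace L => w.comap (algebraMap F L) = v) with ht
  have hmult := DE.sum_mult_fiber F L v
  by_cases hv : v.IsReal
  · have hreal : ∀ w ∈ t, w.IsReal := by
      intro w hw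
      simp only [ht, Finset.mem_filter, Finset.mem_univ, true_and] at hw
      exact hur w (hw ▸ hv)
    have hcard : t.card = Module.finrank F L := by
      have : ∑ w ∈ t, w.mult = t.card := by
        rw [Finset.card_eq_sum_ones]
        exact Finset.sum_congr rfl fun w hw => by
          simp [InfinitePlace.mult, hreal w hw]
      rw [this] at hmult
      simpa [InfinitePlace.mult, hv] using hmult
    rw [Finset.sum_congr rfl (fun w hw => if_pos (hreal w hw)), Finset.sum_const, hcard,
      if_pos hv]
    simp [mul_comm]
  · have hcompl : ∀ w ∈ t, ¬ w.IsReal := by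
      intro w hw hwr
      simp only [ht, Finset.mem_filter, Finset.mem_univ, true_and] at hw
      exact hv (hw ▸ hwr.comap (algebraMap F L))
    have hcard : t.card = Module.finrank F L := by
      have : ∑ w ∈ t, w.mult = 2 * t.card := by
        rw [Finset.card_eq_sum_ones, Finset.mul_sum]
        exact Finset.sum_congr rfl fun w hw => by
          simp [InfinitePlace.mult, hcompl w hw]
      rw [this] at hmult
      have h2 : (2 : ℕ) * t.card = 2 * Module.finrank F L := by
        simpa [InfinitePlace.mult, hv] using hmult
      omega
    rw [Finset.sum_congr rfl (fun w hw => if_neg (hcompl w hw)), Finset.sum_const, hcard,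
      if_neg hv]
    simp [mul_comm]

lemma DE.infinite_side_eq (K : Type*) [Field K] [NumberField K] (d : ℕ)
    (e : InfinitePlace K → ℤ) :
    (d : ℤ) * InfinitePlace.nrComplexPlaces K +
        ∑ᶠ w : {w : InfinitePlace K // w.IsReal}, ((d : ℤ) - e w)
      = ∑ w : InfinitePlace K, (if w.IsReal then ((d : ℤ) - e w) else (d : ℤ)) := by
  classical
  rw [Finset.sum_ite, Finset.sum_const, nsmul_eq_mul]
  have h1 : ∑ᶠ w : {w : InfinitePlace K // w.IsReal}, ((d : ℤ) - e w)
      = ∑ w ∈ Finset.univ.filter (fun w : InfinitePlace K => w.IsReal), ((d : ℤ) - e w) := by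
    rw [finsum_eq_sum_of_fintype]
    exact (Finset.sum_subtype (Finset.univ.filter (fun w : InfinitePlace K => w.IsReal))
      (fun w => by simp) (fun w => (d : ℤ) - e w)).symm
  have h2 : (InfinitePlace.nrComplexPlaces K : ℤ)
      = ((Finset.univ.filter (fun w : InfinitePlace K => ¬ w.IsReal)).card : ℤ) := by
    norm_cast
    refine Fintype.card_of_subtype _ fun w => ?_
    simp [InfinitePlace.not_isReal_iff_isComplex]
  rw [h1, h2]
  ring

lemma DE.finsum_subtype_eq_finset_sum {α : Type*} {P : α → Prop} {T : Finset α}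
    (h : ∀ a, P a ↔ a ∈ T) (f : α → ℤ) :
    ∑ᶠ x : {a // P a}, f x.1 = ∑ x ∈ T, f x := by
  rw [finsum_subtype_eq_finsum_cond]
  have hset : {a | P a} = (T : Set α) := by ext a; simpa using h a
  calc ∑ᶠ (i) (_ : P i), f i = ∑ᶠ i ∈ (T : Set α), f i := by rw [← hset]; rfl
    _ = ∑ x ∈ T, f x := finsum_mem_coe_finset f T

end Aux

theorem data_equality_base_change_of_unramified_at_infinity
    (p : ℕ) (hp : p.Prime)
    (F L : Type*) [Field F] [NumberField F] [Field L] [NumberField L] [Algebra F L]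
    (hur : ∀ w : InfinitePlace L, (w.comap (algebraMap F L)).IsReal → w.IsReal)
    (d : ℕ) (dv : Ideal (𝓞 F) → ℤ) (dplus : InfinitePlace F → ℤ)
    (hF : ∑ᶠ v : {v : Ideal (𝓞 F) // IsFinitePlaceAbove p F v},
            (((d : ℤ) - dv v.1) * localDegree p F v.1) =
          (d : ℤ) * InfinitePlace.nrComplexPlaces F +
            ∑ᶠ v : {v : InfinitePlace F // v.IsReal}, ((d : ℤ) - dplus v)) :
    ∑ᶠ w : {w : Ideal (𝓞 L) // IsFinitePlaceAbove p L w},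
        (((d : ℤ) - dv (Ideal.comap (algebraMap (𝓞 F) (𝓞 L)) w.1)) * localDegree p L w.1) =
      (d : ℤ) * InfinitePlace.nrComplexPlaces L +
        ∑ᶠ w : {w : InfinitePlace L // w.IsReal},
          ((d : ℤ) - dplus ((w : InfinitePlace L).comap (algebraMap F L))) := by
  classical
  set n := Module.finrank F L with hn
  -- Finite side of hF as a finset sum
  have hF_fin : ∑ᶠ v : {v : Ideal (𝓞 F) // IsFinitePlaceAbove p F v},
        (((d : ℤ) - dv v.1) * localDegree p F v.1)
      = ∑ v ∈ (factors (Ideal.map (algebraMap ℤ (𝓞 F)) (Ideal.span {(p : ℤ)}))).toFinset, (((d : ℤ) - dv v) * localDegree p F v) :=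
    DE.finsum_subtype_eq_finset_sum (fun v => DE.mem_TK p hp F v)
      (fun v => ((d : ℤ) - dv v) * (localDegree p F v : ℤ))
  have hL_fin : ∑ᶠ w : {w : Ideal (𝓞 L) // IsFinitePlaceAbove p L w},
        (((d : ℤ) - dv (Ideal.comap (algebraMap (𝓞 F) (𝓞 L)) w.1)) * localDegree p L w.1)
      = ∑ w ∈ (factors (Ideal.map (algebraMap ℤ (𝓞 L)) (Ideal.span {(p : ℤ)}))).toFinset, (((d : ℤ) - dv (Ideal.comap (algebraMap (𝓞 F) (𝓞 L)) w)) *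
          localDegree p L w) :=
    DE.finsum_subtype_eq_finset_sum (fun w => DE.mem_TK p hp L w)
      (fun w => ((d : ℤ) - dv (Ideal.comap (algebraMap (𝓞 F) (𝓞 L)) w)) * (localDegree p L w : ℤ))
  -- comap maps (factors (Ideal.map (algebraMap ℤ (𝓞 L)) (Ideal.span {(p : ℤ)}))).toFinset to (factors (Ideal.map (algebraMap ℤ (𝓞 F)) (Ideal.span {(p : ℤ)}))).toFinset
  have hmaps : ∀ w ∈ (factors (Ideal.map (algebraMap ℤ (𝓞 L)) (Ideal.span {(p : ℤ)}))).toFinset, Ideal.comap (algebraMap (𝓞 F) (𝓞 L)) w ∈ (factors (Ideal.map (algebraMap ℤ (𝓞 F)) (Ideal.span {(p : ℤ)}))).toFinset := by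
    intro w hw
    rw [← DE.mem_TK p hp L] at hw
    rw [← DE.mem_TK p hp F]
    obtain ⟨h1, h2, h3⟩ := hw
    refine ⟨h1.comap _, ?_, ?_⟩
    · intro hb
      have : (p : 𝓞 F) ∈ Ideal.comap (algebraMap (𝓞 F) (𝓞 L)) w := by
        rw [Ideal.mem_comap, map_natCast]; exact h3
      rw [hb, Ideal.mem_bot] at this
      exact hp.ne_zero (by exact_mod_cast this)
    · rw [Ideal.mem_comap, map_natCast]; exact h3
  -- group the L-sum by fibers
  have hgroup : ∑ w ∈ (factors (Ideal.map (algebraMap ℤ (𝓞 L)) (Ideal.span {(p : ℤ)}))).toFinset, (((d : ℤ) - dv (Ideal.comap (algebraMap (𝓞 F) (𝓞 L)) w)) *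
        localDegree p L w)
      = ∑ v ∈ (factors (Ideal.map (algebraMap ℤ (𝓞 F)) (Ideal.span {(p : ℤ)}))).toFinset, ∑ w ∈ (factors (Ideal.map (algebraMap ℤ (𝓞 L)) (Ideal.span {(p : ℤ)}))).toFinset.filter
          (fun w => Ideal.comap (algebraMap (𝓞 F) (𝓞 L)) w = v),
          (((d : ℤ) - dv (Ideal.comap (algebraMap (𝓞 F) (𝓞 L)) w)) * localDegree p L w) :=
    (Finset.sum_fiberwise_of_maps_to hmaps _).symm
  have hinner : ∀ v ∈ (factors (Ideal.map (algebraMap ℤ (𝓞 F)) (Ideal.span {(p : ℤ)}))).toFinset,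
      ∑ w ∈ (factors (Ideal.map (algebraMap ℤ (𝓞 L)) (Ideal.span {(p : ℤ)}))).toFinset.filter (fun w => Ideal.comap (algebraMap (𝓞 F) (𝓞 L)) w = v),
          (((d : ℤ) - dv (Ideal.comap (algebraMap (𝓞 F) (𝓞 L)) w)) * localDegree p L w)
        = (n : ℤ) * (((d : ℤ) - dv v) * localDegree p F v) := by
    intro v hv
    rw [← DE.mem_TK p hp F] at hv
    have hset : (factors (Ideal.map (algebraMap ℤ (𝓞 L)) (Ideal.span {(p : ℤ)}))).toFinset.filter (fun w => Ideal.comap (algebraMap (𝓞 F) (𝓞 L)) w = v)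
        = (factors (Ideal.map (algebraMap (𝓞 F) (𝓞 L)) v)).toFinset := by
      ext w
      rw [Finset.mem_filter, DE.fiber_char F L p hp hv, ← DE.mem_TK p hp L]
    rw [hset]
    have hcongr : ∀ w ∈ (factors (Ideal.map (algebraMap (𝓞 F) (𝓞 L)) v)).toFinset,
        (((d : ℤ) - dv (Ideal.comap (algebraMap (𝓞 F) (𝓞 L)) w)) * localDegree p L w)
          = ((d : ℤ) - dv v) * localDegree p L w := by
      intro w hw
      rw [DE.fiber_char F L p hp hv] at hw
      rw [hw.2]
    rw [Finset.sum_congr rfl hcongr, ← Finset.mul_sum, ← Nat.cast_sum,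
      DE.sum_fiber_localDegree F L p hp hv]
    push_cast
    ring
  -- infinite side
  have hinf_L : (d : ℤ) * InfinitePlace.nrComplexPlaces L +
        ∑ᶠ w : {w : InfinitePlace L // w.IsReal},
          ((d : ℤ) - dplus ((w : InfinitePlace L).comap (algebraMap F L)))
      = (n : ℤ) * ((d : ℤ) * InfinitePlace.nrComplexPlaces F +
          ∑ᶠ v : {v : InfinitePlace F // v.IsReal}, ((d : ℤ) - dplus v)) := by
    rw [DE.infinite_side_eq L d (fun w => dplus (w.comap (algebraMap F L))),
      DE.infinite_side_eq F d dplus]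
    rw [← Finset.sum_fiberwise_of_maps_to
      (g := fun w : InfinitePlace L => w.comap (algebraMap F L))
      (t := (Finset.univ : Finset (InfinitePlace F))) (fun w _ => Finset.mem_univ _)
      (fun w => if w.IsReal then ((d : ℤ) - dplus (w.comap (algebraMap F L))) else (d : ℤ))]
    rw [Finset.mul_sum]
    refine Finset.sum_congr rfl fun v _ => ?_
    have hcongr : ∀ w ∈ Finset.univ.filter
        (fun w : InfinitePlace L => w.comap (algebraMap F L) = v),
        (if w.IsReal then ((d : ℤ) - dplus (w.comap (algebraMap F L))) else (d : ℤ))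
          = (if w.IsReal then ((d : ℤ) - dplus v) else (d : ℤ)) := by
      intro w hw
      simp only [Finset.mem_filter, Finset.mem_univ, true_and] at hw
      rw [hw]
    rw [Finset.sum_congr rfl hcongr, DE.fiber_sum_ite F L hur d dplus v]
  -- put everything together
  rw [hL_fin, hgroup, Finset.sum_congr rfl hinner, ← Finset.mul_sum, ← hF_fin, hF, hinf_L]
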